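/- Let σ^∨ ⊆ ℝ^d be a full-dimensional pointed polyhedral cone with apex 0, and for each facet-direction τ of σ^∨ let u_τ ∈ σ^∨ be a nonzero vector along the corresponding extreme ray, with translation amounts N(τ) ≥ 0. Then the complement σ^∨ \ ⋃_τ (σ^∨ + N(τ)·u_τ) is bounded, i.e., contained in a bounded neighborhood of the apex. -/
import Mathlib


open Set Pointwise

/-- Let `C = σ^∨ ⊆ ℝ^d` be a full-dimensional pointed polyhedral cone with apex `0`,
generated by vectors `u_τ` each spanning an extreme ray, and let `N(τ) ≥ 0` be translation
amounts. Then the complement `C \ ⋃_τ (C + N(τ)·u_τ)` is bounded. -/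
theorem stmt_17 (d m : ℕ) (u : Fin m → (Fin d → ℝ)) (hu : ∀ τ, u τ ≠ 0)
    (C : Set (Fin d → ℝ))
    (hC : C = {x | ∃ t : Fin m → ℝ, (∀ τ, 0 ≤ t τ) ∧ x = ∑ τ, t τ • u τ})
    (hray : ∀ τ, IsExtreme ℝ C {x | ∃ t : ℝ, 0 ≤ t ∧ x = t • u τ})
    (hpointed : ∀ x ∈ C, -x ∈ C → x = 0)
    (hfull : Submodule.span ℝ C = ⊤)
    (N : Fin m → ℝ) (hN : ∀ τ, 0 ≤ N τ) :
    Bornology.IsBounded (C \ ⋃ τ, (N τ • u τ) +ᵥ C) := by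
  subst hC
  apply Metric.isBounded_closedBall (x := (0 : Fin d → ℝ))
    (r := ∑ τ, N τ * ‖u τ‖) |>.subset
  rintro x ⟨⟨t, ht, rfl⟩, hx2⟩
  -- every coefficient is < N τ
  have hlt : ∀ τ, t τ < N τ := by
    intro τ₀
    by_contra h
    push_neg at h
    apply hx2
    refine mem_iUnion.2 ⟨τ₀, ?_⟩
    rw [Set.mem_vadd_set]
    refine ⟨∑ τ, (Function.update t τ₀ (t τ₀ - N τ₀)) τ • u τ,
      ⟨Function.update t τ₀ (t τ₀ - N τ₀), ?_, rfl⟩, ?_⟩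
    · intro τ
      rcases eq_or_ne τ τ₀ with rfl | hne
      · simpa using sub_nonneg.2 h
      · simpa [Function.update_of_ne hne] using ht τ
    · have : ∑ τ, (Function.update t τ₀ (t τ₀ - N τ₀)) τ • u τ
          = ∑ τ, t τ • u τ - N τ₀ • u τ₀ := by
        rw [← Finset.add_sum_erase _ _ (Finset.mem_univ τ₀),
          ← Finset.add_sum_erase _ (fun τ => t τ • u τ) (Finset.mem_univ τ₀)]
        rw [Finset.sum_congr rfl
          (fun τ hτ => by rw [Function.update_of_ne (Finset.ne_of_mem_erase hτ)])]
        rw [Function.update_self, sub_smul]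
        abel
      simp [this, vadd_eq_add]
  rw [Metric.mem_closedBall, dist_zero_right]
  calc ‖∑ τ, t τ • u τ‖ ≤ ∑ τ, ‖t τ • u τ‖ := norm_sum_le _ _
    _ = ∑ τ, t τ * ‖u τ‖ := by
        refine Finset.sum_congr rfl fun τ _ => ?_
        rw [norm_smul, Real.norm_of_nonneg (ht τ)]
    _ ≤ ∑ τ, N τ * ‖u τ‖ :=
        Finset.sum_le_sum fun τ _ => mul_le_mul_of_nonneg_right (hlt τ).le (norm_nonneg _)
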